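/- arXiv:1708.08817 — 3 statements merged into one kernel-verified Lean document; each statement's English description precedes it below -/
import Mathlib

section
/- If G is a bipartite graph with parts A and B such that for every subset S of A with |S| ≤ k and every subset T of A with |T| ≤ k disjoint from S, there exists a vertex in B adjacent to all of S and none of T, and |A| ≥ 2k, then |B| ≥ 2^k. -/
/-- If G is a bipartite graph with parts A and B that is (k,k)-separating
for A, and |A| ≥ 2k, then |B| ≥ 2^k. -/
theorem stmt_0 {V : Type} [Fintype V] [DecidableEq V] (G : SimpleGraph V)
    (k : ℕ) (A B : Finset V) (hAB : Disjoint A B) (hA : 2 * k ≤ A.card)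
    (hsep : ∀ S ⊆ A, ∀ T ⊆ A, Disjoint S T → S.card ≤ k → T.card ≤ k →
      ∃ v ∈ B, (∀ x ∈ S, G.Adj v x) ∧ (∀ y ∈ T, ¬ G.Adj v y)) :
    2 ^ k ≤ B.card := by
  have hk : k ≤ A.card := le_trans (by omega) hA
  obtain ⟨W, hWA, hWcard⟩ := Finset.exists_subset_card_eq hk
  have hwit : ∀ X ∈ W.powerset, ∃ v ∈ B,
      (∀ x ∈ X, G.Adj v x) ∧ (∀ y ∈ W \ X, ¬ G.Adj v y) := by
    intro X hX
    rw [Finset.mem_powerset] at hX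
    exact hsep X (hX.trans hWA) (W \ X) ((Finset.sdiff_subset).trans hWA)
      (Finset.disjoint_sdiff)
      (le_trans (Finset.card_le_card hX) (le_of_eq hWcard))
      (le_trans (Finset.card_le_card Finset.sdiff_subset) (le_of_eq hWcard))
  choose f hfB hfadj hfnadj using hwit
  have hinj : ∀ X ∈ W.powerset, ∀ Y ∈ W.powerset,
      ∀ (hX : X ∈ W.powerset) (hY : Y ∈ W.powerset), f X hX = f Y hY → X = Y := by
    intro X _ Y _ hX hY hf
    have key : ∀ Z hZ Z' hZ', f Z hZ = f Z' hZ' → Z ⊆ Z' := by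
      intro Z hZ Z' hZ' h x hx
      by_contra hxZ'
      have hxW : x ∈ W := (Finset.mem_powerset.mp hZ) hx
      exact hfnadj Z' hZ' x (Finset.mem_sdiff.mpr ⟨hxW, hxZ'⟩)
        (h ▸ hfadj Z hZ x hx)
    exact Finset.Subset.antisymm (key X hX Y hY hf) (key Y hY X hX hf.symm)
  calc 2 ^ k = W.powerset.card := by rw [Finset.card_powerset, hWcard]
    _ ≤ B.card := by
        apply Finset.card_le_card_of_injOn (fun X => if h : X ∈ W.powerset then f X h else f ∅ (by simp))
        · intro X hX
          simp only [Finset.mem_coe.mp hX, dif_pos, Finset.mem_coe]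
          exact hfB X hX
        · intro X hX Y hY h
          simp only [Finset.mem_coe] at hX hY
          simp only [hX, hY, dif_pos] at h
          exact hinj X hX Y hY hX hY h
end

section
/- Let G be a bipartite graph with parts A, B with |A| ≥ 2k, and let μ be a probability measure on A. If G is (k,0)-separating for A (every subset of A of size at most k has a common neighbour in B) and μ(N(x)) < ε for each x ∈ B, then |B| > 1/ε^k. -/
/-- If the bipartite graph G = (A,B) with |A| ≥ 2k is (k,0)-separating for A,
μ is a probability measure on A, and μ(N(x)) < ε for each x ∈ B, then |B| > 1/ε^k. -/
theorem stmt_1 {V : Type} [Fintype V] [DecidableEq V] (G : SimpleGraph V)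
    [DecidableRel G.Adj] (k : ℕ) (hk : 0 < k) (A B : Finset V) (hAB : Disjoint A B)
    (hA : 2 * k ≤ A.card) (ε : ℝ) (hε : 0 < ε)
    (μ : V → ℝ) (hμ0 : ∀ v, 0 ≤ μ v) (hμ1 : ∑ v ∈ A, μ v = 1)
    (hsep : ∀ S ⊆ A, S.card ≤ k → ∃ v ∈ B, ∀ x ∈ S, G.Adj v x)
    (hnbr : ∀ x ∈ B, ∑ y ∈ A.filter (fun y => G.Adj x y), μ y < ε) :
    (1 : ℝ) / ε ^ k < B.card := by
  classical
  set N : V → Finset V := fun x => A.filter (fun y => G.Adj x y) with hN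
  have hεk : 0 < ε ^ k := pow_pos hε k
  set P : Finset (Fin k → V) := Fintype.piFinset (fun _ : Fin k => A) with hP
  have key : (1 : ℝ) ≤ ∑ x ∈ B, (∑ y ∈ N x, μ y) ^ k := by
    have h1 : (1 : ℝ) = ∑ t ∈ P, ∏ i, μ (t i) := by
      rw [hP, ← Finset.prod_univ_sum]
      simp [hμ1]
    rw [h1]
    have hstep : ∀ t ∈ P,
        ∏ i, μ (t i) ≤ ∑ x ∈ B, if (∀ i, G.Adj x (t i)) then ∏ i, μ (t i) else 0 := by
      intro t ht
      have htA : ∀ i, t i ∈ A := by simpa [hP, Fintype.mem_piFinset] using ht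
      obtain ⟨v, hvB, hv⟩ := hsep (Finset.image t Finset.univ)
        (by
          intro y hy
          simp only [Finset.mem_image] at hy
          obtain ⟨i, _, rfl⟩ := hy
          exact htA i)
        (le_trans Finset.card_image_le (by simp))
      have hprod0 : 0 ≤ ∏ i, μ (t i) := Finset.prod_nonneg fun i _ => hμ0 _
      calc ∏ i, μ (t i)
          = (if (∀ i, G.Adj v (t i)) then ∏ i, μ (t i) else 0) := by
            rw [if_pos (fun i => hv _ (Finset.mem_image_of_mem t (Finset.mem_univ i)))]
        _ ≤ ∑ x ∈ B, if (∀ i, G.Adj x (t i)) then ∏ i, μ (t i) else 0 :=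
            Finset.single_le_sum
              (f := fun x => if (∀ i, G.Adj x (t i)) then ∏ i, μ (t i) else 0)
              (fun x _ => by
              split_ifs
              · exact hprod0
              · exact le_rfl) hvB
    calc ∑ t ∈ P, ∏ i, μ (t i)
        ≤ ∑ t ∈ P, ∑ x ∈ B, if (∀ i, G.Adj x (t i)) then ∏ i, μ (t i) else 0 :=
          Finset.sum_le_sum hstep
      _ = ∑ x ∈ B, ∑ t ∈ P, if (∀ i, G.Adj x (t i)) then ∏ i, μ (t i) else 0 :=
          Finset.sum_comm
      _ = ∑ x ∈ B, (∑ y ∈ N x, μ y) ^ k := by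
          refine Finset.sum_congr rfl fun x _ => ?_
          rw [← Finset.sum_filter]
          have hfil : P.filter (fun t => ∀ i, G.Adj x (t i)) =
              Fintype.piFinset (fun _ : Fin k => N x) := by
            ext t
            simp [hP, hN, Fintype.mem_piFinset, Finset.mem_filter, forall_and]
          rw [hfil, ← Finset.prod_univ_sum]
          simp
  have hBne : B.Nonempty := by
    rcases Finset.eq_empty_or_nonempty B with h | h
    · rw [h] at key; simp at key; linarith
    · exact h
  have hlt : ∑ x ∈ B, (∑ y ∈ N x, μ y) ^ k < ∑ x ∈ B, ε ^ k := by
    refine Finset.sum_lt_sum_of_nonempty hBne fun x hx => ?_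
    exact pow_lt_pow_left₀ (hnbr x hx) (Finset.sum_nonneg fun y _ => hμ0 y) hk.ne'
  rw [Finset.sum_const, nsmul_eq_mul] at hlt
  have : (1 : ℝ) < B.card * ε ^ k := lt_of_le_of_lt key hlt
  rw [div_lt_iff₀ hεk]
  linarith
end

section
/- Let G be a bipartite graph with parts A, B which is (k,0)-separating for A, and let μ be the covering measure on B (obtained by sampling X₁,...,X_k i.i.d. uniform from A and then choosing uniformly a vertex of B whose neighbourhood contains all X_i). If B' ⊆ B has μ(B') > ε for some ε > 0, then |⋃_{x ∈ B'} N(x)| ≥ (1 − (1/k)·log(1/ε))·|A|. -/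
/-- Let G = (A,B) be (k,0)-separating for A and let μ be the covering
measure on B (sample X₁,...,X_k i.i.d. uniform from A, then pick uniformly a vertex of B
whose neighbourhood contains all the Xᵢ).  If B' ⊆ B has μ(B') > ε, then
|⋃_{x ∈ B'} N(x)| ≥ (1 − (1/k)·log(1/ε))·|A|. -/
theorem stmt_4 {V : Type} [Fintype V] [DecidableEq V] (G : SimpleGraph V)
    [DecidableRel G.Adj] (k : ℕ) (hk : 0 < k) (A B : Finset V) (hAB : Disjoint A B)
    (hA : A.Nonempty)
    (hsep : ∀ S ⊆ A, S.card ≤ k → ∃ v ∈ B, ∀ x ∈ S, G.Adj v x)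
    (B' : Finset V) (hB' : B' ⊆ B) (ε : ℝ) (hε : 0 < ε)
    (hμ : ε < (∑ f : Fin k → {x // x ∈ A},
        (((B.filter (fun v => ∀ i, G.Adj v (f i))) ∩ B').card : ℝ)
          / ((B.filter (fun v => ∀ i, G.Adj v (f i))).card : ℝ)) / (A.card : ℝ) ^ k) :
    (1 - (1 / (k : ℝ)) * Real.log ε⁻¹) * A.card
      ≤ ((B'.biUnion (fun x => A.filter (fun a => G.Adj x a))).card : ℝ) := by
  classical
  set U := B'.biUnion (fun x => A.filter (fun a => G.Adj x a)) with hU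
  have hUA : U ⊆ A := by
    intro a ha
    simp only [hU, Finset.mem_biUnion, Finset.mem_filter] at ha
    obtain ⟨x, _, ha, _⟩ := ha
    exact ha
  have hApos : (0:ℝ) < (A.card : ℝ) := by exact_mod_cast Finset.card_pos.mpr hA
  have hkR : ((k:ℝ)) ≠ 0 := by positivity
  -- bound each term by the product of indicators
  have hterm : ∀ f : Fin k → {x // x ∈ A},
      (((B.filter (fun v => ∀ i, G.Adj v (f i))) ∩ B').card : ℝ)
        / ((B.filter (fun v => ∀ i, G.Adj v (f i))).card : ℝ)
      ≤ ∏ i, (if ((f i : V) ∈ U) then (1:ℝ) else 0) := by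
    intro f
    by_cases h : ∀ i, (f i : V) ∈ U
    · have h1 : ∏ i, (if ((f i : V) ∈ U) then (1:ℝ) else 0) = 1 := by simp [h]
      rw [h1]
      apply div_le_one_of_le₀
      · exact_mod_cast Finset.card_le_card Finset.inter_subset_left
      · positivity
    · push_neg at h
      obtain ⟨i, hi⟩ := h
      have hempty : (B.filter (fun v => ∀ i, G.Adj v (f i))) ∩ B' = ∅ := by
        rw [Finset.eq_empty_iff_forall_notMem]
        intro v hv
        rw [Finset.mem_inter, Finset.mem_filter] at hv
        exact hi (Finset.mem_biUnion.mpr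
          ⟨v, hv.2, Finset.mem_filter.mpr ⟨(f i).2, hv.1.2 i⟩⟩)
      rw [hempty]
      simp only [Finset.card_empty, Nat.cast_zero, zero_div]
      exact Finset.prod_nonneg (fun j _ => by positivity)
  have hsum : (∑ f : Fin k → {x // x ∈ A},
      (((B.filter (fun v => ∀ i, G.Adj v (f i))) ∩ B').card : ℝ)
        / ((B.filter (fun v => ∀ i, G.Adj v (f i))).card : ℝ))
      ≤ (U.card : ℝ) ^ k := by
    have h2 : ∑ x : {x // x ∈ A}, (if ((x : V) ∈ U) then (1:ℝ) else 0)
        = (U.card : ℝ) := by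
      rw [Finset.univ_eq_attach, Finset.sum_attach A (fun a => if a ∈ U then (1:ℝ) else 0),
        Finset.sum_boole]
      have hf : A.filter (fun a => a ∈ U) = U := by
        ext a
        simp only [Finset.mem_filter]
        exact ⟨fun h => h.2, fun h => ⟨hUA h, h⟩⟩
      rw [hf]
    calc (∑ f : Fin k → {x // x ∈ A},
        (((B.filter (fun v => ∀ i, G.Adj v (f i))) ∩ B').card : ℝ)
          / ((B.filter (fun v => ∀ i, G.Adj v (f i))).card : ℝ))
        ≤ ∑ f : Fin k → {x // x ∈ A}, ∏ i, (if ((f i : V) ∈ U) then (1:ℝ) else 0) :=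
          Finset.sum_le_sum (fun f _ => hterm f)
      _ = ∏ _i : Fin k, ∑ x : {x // x ∈ A}, (if ((x : V) ∈ U) then (1:ℝ) else 0) := by
          rw [Finset.prod_univ_sum]
          rw [Fintype.piFinset_univ]
      _ = (U.card : ℝ) ^ k := by rw [h2, Finset.prod_const, Finset.card_univ,
          Fintype.card_fin]
  set r : ℝ := ε ^ ((1:ℝ)/k) with hr
  have hrpos : 0 < r := Real.rpow_pos_of_pos hε _
  have hrk : r ^ k = ε := by
    rw [hr, ← Real.rpow_natCast (ε ^ ((1:ℝ)/k)) k, ← Real.rpow_mul hε.le,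
      one_div_mul_cancel hkR, Real.rpow_one]
  have hkey : r * (A.card : ℝ) ≤ (U.card : ℝ) := by
    apply le_of_pow_le_pow_left₀ hk.ne' (by positivity)
    rw [mul_pow, hrk]
    have hεA : ε * (A.card : ℝ) ^ k ≤ (U.card : ℝ) ^ k := by
      have := (lt_div_iff₀ (by positivity : (0:ℝ) < (A.card:ℝ)^k)).mp hμ
      exact le_trans this.le hsum
    exact hεA
  have hexp : 1 - (1 / (k : ℝ)) * Real.log ε⁻¹ ≤ r := by
    rw [Real.log_inv]
    have : r = Real.exp (((1:ℝ)/k) * Real.log ε) := by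
      rw [hr, Real.rpow_def_of_pos hε, mul_comm]
    rw [this]
    have := Real.add_one_le_exp (((1:ℝ)/k) * Real.log ε)
    linarith
  calc (1 - (1 / (k : ℝ)) * Real.log ε⁻¹) * (A.card : ℝ)
      ≤ r * (A.card : ℝ) := mul_le_mul_of_nonneg_right hexp hApos.le
    _ ≤ (U.card : ℝ) := hkey
end
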